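/- Assume either (i) a_{−1}(1) > a_1(1) and y_{−1,0} + y_{−1,1} > y_{1,0} + y_{1,1}, or (ii) a_{−1}(1) ≥ a_1(1) > 0 and y_{−1,0} + y_{−1,1} ≥ y_{1,0} + y_{1,1} > 0. Let G be a semi-infinite matrix with G_{ij} ≥ 0 and ∑_{j≥1} G_{ij} ≤ 1 for every i ≥ 1, satisfying the equation G = A_1 G² + A_0 G + A_{−1} entrywise (all series absolutely convergent), and such that (G_k)_{ij} ≤ G_{ij} for all i, j and all k ≥ 0. Then lim_{k→∞} ‖G − G_k‖_∞ = 0, where ‖A‖_∞ := sup_{i≥1} ∑_{j≥1} |A_{ij}|. -/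

import Mathlib

open Filter Topology

/- Convention: the transition probabilities a_{i,j} (i,j ∈ {−1,0,1}) are encoded
as `v : Fin 3 → Fin 3 → ℝ` and the boundary probabilities y_{i,j}
(i ∈ {−1,0,1}, j ∈ {0,1}) as `y : Fin 3 → Fin 2 → ℝ`, where the first index
`0, 1, 2` corresponds to `−1, 0, 1`. Rows and columns of semi-infinite matrices
are indexed by ℕ, with index `r : ℕ` representing the row `r+1 ≥ 1`. -/

/-- The infinity norm of a semi-infinite matrix: the supremum of the row sums. -/
noncomputable def normInf (A : ℕ → ℕ → ℝ) : ℝ := ⨆ i, ∑' j, |A i j|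

/-- Entrywise matrix product of semi-infinite matrices. -/
noncomputable def matMul (A B : ℕ → ℕ → ℝ) : ℕ → ℕ → ℝ :=
  fun i j => ∑' k, A i k * B k j

/-- The block coefficient A_i: (A_i)_{1,1} = y_{i,0}, (A_i)_{1,2} = y_{i,1}, and
for rows r ≥ 2 the subdiagonal, diagonal and superdiagonal entries are
a_{i,−1}, a_{i,0}, a_{i,1}; all other entries vanish. -/
noncomputable def qbdA (v : Fin 3 → Fin 3 → ℝ) (y : Fin 3 → Fin 2 → ℝ)
    (i : Fin 3) : ℕ → ℕ → ℝ := fun r c =>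
  if r = 0 then (if c = 0 then y i 0 else if c = 1 then y i 1 else 0)
  else if c + 1 = r then v i 0 else if c = r then v i 1
  else if c = r + 1 then v i 2 else 0

/-- The natural iteration G_0 = 0, G_{k+1} = A_1 G_k² + A_0 G_k + A_{−1}. -/
noncomputable def gbdIter (Am1 A0 A1 : ℕ → ℕ → ℝ) : ℕ → ℕ → ℕ → ℝ
  | 0 => fun _ _ => 0
  | k + 1 => fun i j =>
      matMul A1 (matMul (gbdIter Am1 A0 A1 k) (gbdIter Am1 A0 A1 k)) i j +
        matMul A0 (gbdIter Am1 A0 A1 k) i j + Am1 i j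

/-! ### Auxiliary scalar iteration -/

/-- auxiliary scalar iteration bounding row sums of the `gbdIter` iterates -/
noncomputable def sigSeq (p q r pb qb rb : ℝ) : ℕ → ℝ
  | 0 => 0
  | k + 1 => min (p + q * sigSeq p q r pb qb rb k + r * (sigSeq p q r pb qb rb k)^2)
      (pb + qb * sigSeq p q r pb qb rb k + rb * (sigSeq p q r pb qb rb k)^2)

lemma sigSeq_nonneg {p q r pb qb rb : ℝ} (hp : 0 ≤ p) (hq : 0 ≤ q) (hr : 0 ≤ r)
    (hpb : 0 ≤ pb) (hqb : 0 ≤ qb) (hrb : 0 ≤ rb) : ∀ k, 0 ≤ sigSeq p q r pb qb rb k := by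
  intro k
  induction k with
  | zero => simp [sigSeq]
  | succ k ih =>
    rw [sigSeq]
    apply le_min <;> positivity

lemma sigSeq_le_one {p q r pb qb rb : ℝ} (hp : 0 ≤ p) (hq : 0 ≤ q) (hr : 0 ≤ r)
    (hpb : 0 ≤ pb) (hqb : 0 ≤ qb) (hrb : 0 ≤ rb)
    (hs : p + q + r = 1) (hsb : pb + qb + rb = 1) :
    ∀ k, sigSeq p q r pb qb rb k ≤ 1 := by
  intro k
  induction k with
  | zero => simp [sigSeq]
  | succ k ih =>
    have h0 := sigSeq_nonneg hp hq hr hpb hqb hrb k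
    rw [sigSeq]
    refine min_le_of_left_le ?_
    nlinarith [mul_nonneg hq (sub_nonneg.2 ih), mul_nonneg hr (sub_nonneg.2 ih),
      mul_nonneg (mul_nonneg hr h0) (sub_nonneg.2 ih)]

lemma sigSeq_mono {p q r pb qb rb : ℝ} (hp : 0 ≤ p) (hq : 0 ≤ q) (hr : 0 ≤ r)
    (hpb : 0 ≤ pb) (hqb : 0 ≤ qb) (hrb : 0 ≤ rb) :
    Monotone (sigSeq p q r pb qb rb) := by
  have step : ∀ k, sigSeq p q r pb qb rb k ≤ sigSeq p q r pb qb rb (k+1) := by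
    intro k
    induction k with
    | zero =>
      rw [sigSeq]
      simp [sigSeq]
      constructor <;> positivity
    | succ k ih =>
      have h0 := sigSeq_nonneg hp hq hr hpb hqb hrb k
      have h1 := sigSeq_nonneg hp hq hr hpb hqb hrb (k+1)
      have hsq : (sigSeq p q r pb qb rb k)^2 ≤ (sigSeq p q r pb qb rb (k+1))^2 := by
        nlinarith
      rw [show k+1+1 = (k+1)+1 from rfl, sigSeq, sigSeq]
      apply min_le_min <;>
        nlinarith [mul_le_mul_of_nonneg_left ih hq, mul_le_mul_of_nonneg_left hsq hr,
          mul_le_mul_of_nonneg_left ih hqb, mul_le_mul_of_nonneg_left hsq hrb]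
  exact monotone_nat_of_le_succ step

private lemma keylt {p q r L : ℝ} (hr : 0 ≤ r) (hs : p + q + r = 1) (hL0 : 0 ≤ L)
    (hLlt : L < 1) (hd : r < p ∨ (r ≤ p ∧ 0 < r)) : L < p + q * L + r * L^2 := by
  have hpr : r * L < p := by
    rcases hd with h | ⟨h, h'⟩
    · calc r * L ≤ r * 1 := by nlinarith
        _ = r := by ring
        _ < p := h
    · calc r * L < r * 1 := by nlinarith
        _ = r := by ring
        _ ≤ p := h
  nlinarith [mul_pos (sub_pos.mpr hLlt) (sub_pos.mpr hpr)]

lemma sigSeq_tendsto {p q r pb qb rb : ℝ} (hp : 0 ≤ p) (hq : 0 ≤ q) (hr : 0 ≤ r)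
    (hpb : 0 ≤ pb) (hqb : 0 ≤ qb) (hrb : 0 ≤ rb)
    (hs : p + q + r = 1) (hsb : pb + qb + rb = 1)
    (hdrift : (r < p ∧ rb < pb) ∨ (r ≤ p ∧ 0 < r ∧ rb ≤ pb ∧ 0 < rb)) :
    Tendsto (sigSeq p q r pb qb rb) atTop (𝓝 1) := by
  set σ := sigSeq p q r pb qb rb with hσ
  have hbdd : BddAbove (Set.range σ) := by
    refine ⟨1, ?_⟩
    rintro x ⟨k, rfl⟩
    exact sigSeq_le_one hp hq hr hpb hqb hrb hs hsb k
  have hmono := sigSeq_mono hp hq hr hpb hqb hrb (p := p)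
  have htend : Tendsto σ atTop (𝓝 (⨆ k, σ k)) := tendsto_atTop_ciSup hmono hbdd
  set L := ⨆ k, σ k with hL
  have hL1 : L ≤ 1 := ciSup_le (sigSeq_le_one hp hq hr hpb hqb hrb hs hsb)
  have hL0 : 0 ≤ L := le_trans (sigSeq_nonneg hp hq hr hpb hqb hrb 0) (le_ciSup hbdd 0)
  have htend' : Tendsto (fun k => σ (k+1)) atTop (𝓝 L) :=
    htend.comp (tendsto_add_atTop_nat 1)
  have hcont : Tendsto (fun k => min (p + q * σ k + r * (σ k)^2)
      (pb + qb * σ k + rb * (σ k)^2)) atTop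
      (𝓝 (min (p + q * L + r * L^2) (pb + qb * L + rb * L^2))) := by
    apply Tendsto.min
    · exact (tendsto_const_nhds.add ((tendsto_const_nhds.mul htend))).add
        (tendsto_const_nhds.mul (htend.pow 2))
    · exact (tendsto_const_nhds.add ((tendsto_const_nhds.mul htend))).add
        (tendsto_const_nhds.mul (htend.pow 2))
  have heq : ∀ k, σ (k+1) = min (p + q * σ k + r * (σ k)^2)
      (pb + qb * σ k + rb * (σ k)^2) := fun k => rfl
  have hfix : L = min (p + q * L + r * L^2) (pb + qb * L + rb * L^2) := by
    apply tendsto_nhds_unique htend'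
    simpa [heq] using hcont
  have hLeq : L = 1 := by
    by_contra hne
    have hLlt : L < 1 := lt_of_le_of_ne hL1 hne
    have h1 : L < p + q * L + r * L^2 := by
      apply keylt hr hs hL0 hLlt
      rcases hdrift with ⟨h, _⟩ | ⟨h, h', _⟩
      · exact Or.inl h
      · exact Or.inr ⟨h, h'⟩
    have h2 : L < pb + qb * L + rb * L^2 := by
      apply keylt hrb hsb hL0 hLlt
      rcases hdrift with ⟨_, h⟩ | ⟨_, _, h, h'⟩
      · exact Or.inl h
      · exact Or.inr ⟨h, h'⟩
    have := lt_min h1 h2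
    rw [← hfix] at this
    exact lt_irrefl _ this
  rw [← hLeq]
  exact htend

/-! ### Matrix lemmas -/

lemma matMul_nonneg {A B : ℕ → ℕ → ℝ} (hA : ∀ i j, 0 ≤ A i j) (hB : ∀ i j, 0 ≤ B i j)
    (i j : ℕ) : 0 ≤ matMul A B i j :=
  tsum_nonneg fun k => mul_nonneg (hA i k) (hB k j)

/-- Fubini for the square of a substochastic nonneg matrix. -/
lemma matMul_self_row {B : ℕ → ℕ → ℝ} (hB : ∀ i j, 0 ≤ B i j)
    (hS : ∀ i, Summable (B i)) (hS1 : ∀ i, ∑' j, B i j ≤ 1) (t : ℕ) :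
    Summable (fun j => matMul B B t j) ∧
      Summable (fun l => B t l * ∑' j, B l j) ∧
      ∑' j, matMul B B t j = ∑' l, B t l * ∑' j, B l j := by
  set f : ℕ → ℕ → ℝ := fun l j => B t l * B l j with hf
  have hnn : ∀ l j, 0 ≤ f l j := fun l j => mul_nonneg (hB t l) (hB l j)
  have hrow : ∀ l, Summable (f l) := fun l => (hS l).mul_left _
  have htsrow : ∀ l, ∑' j, f l j = B t l * ∑' j, B l j := fun l => tsum_mul_left
  have hcs' : Summable (fun l => B t l * ∑' j, B l j) := by
    apply Summable.of_nonneg_of_le (fun l => mul_nonneg (hB t l) (tsum_nonneg fun j => hB l j))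
      (fun l => ?_) (hS t)
    calc B t l * ∑' j, B l j ≤ B t l * 1 :=
          mul_le_mul_of_nonneg_left (hS1 l) (hB t l)
      _ = B t l := mul_one _
  have hcs : Summable (fun l => ∑' j, f l j) := by
    rw [show (fun l => ∑' j, f l j) = fun l => B t l * ∑' j, B l j from funext htsrow]
    exact hcs'
  have huncurry : Summable (Function.uncurry f) :=
    (summable_prod_of_nonneg (f := Function.uncurry f) (fun p => hnn p.1 p.2)).2 ⟨hrow, hcs⟩
  have hcol : ∀ j, Summable (fun l => f l j) := by
    intro j
    apply Summable.of_nonneg_of_le (fun l => hnn l j) (fun l => ?_) (hS t)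
    have hBlj : B l j ≤ 1 := le_trans (Summable.le_tsum (hS l) j (fun m _ => hB l m)) (hS1 l)
    calc f l j ≤ B t l * 1 := mul_le_mul_of_nonneg_left hBlj (hB t l)
      _ = B t l := mul_one _
  have hswap : Summable (Function.uncurry fun j l => f l j) := huncurry.prod_symm
  have hsumm : Summable (fun j => matMul B B t j) := by
    have h2 := (summable_prod_of_nonneg (f := Function.uncurry fun j l => f l j)
      (fun p => hnn p.2 p.1)).1 hswap
    exact h2.2
  refine ⟨hsumm, hcs', ?_⟩
  have hcomm : ∑' j, ∑' l, f l j = ∑' l, ∑' j, f l j := Summable.tsum_comm' huncurry hrow hcol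
  calc ∑' j, matMul B B t j = ∑' j, ∑' l, f l j := rfl
    _ = ∑' l, ∑' j, f l j := hcomm
    _ = ∑' l, B t l * ∑' j, B l j := tsum_congr htsrow

lemma qbdA_nonneg {v : Fin 3 → Fin 3 → ℝ} {y : Fin 3 → Fin 2 → ℝ}
    (hvnn : ∀ i j, 0 ≤ v i j) (hynn : ∀ i j, 0 ≤ y i j) (i : Fin 3) (r c : ℕ) :
    0 ≤ qbdA v y i r c := by
  unfold qbdA
  split_ifs <;> first | apply hvnn | apply hynn | norm_num

/-- Row formulas for multiplication by the banded qbdA matrices. -/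
lemma matMul_qbdA_zero (v : Fin 3 → Fin 3 → ℝ) (y : Fin 3 → Fin 2 → ℝ) (i : Fin 3)
    (B : ℕ → ℕ → ℝ) (j : ℕ) :
    matMul (qbdA v y i) B 0 j = y i 0 * B 0 j + y i 1 * B 1 j := by
  have h : ∀ k ∉ ({0, 1} : Finset ℕ), qbdA v y i 0 k * B k j = 0 := by
    intro k hk
    simp only [Finset.mem_insert, Finset.mem_singleton, not_or] at hk
    simp [qbdA, hk.1, hk.2]
  rw [matMul, tsum_eq_sum h]
  simp [qbdA]

lemma matMul_qbdA_succ (v : Fin 3 → Fin 3 → ℝ) (y : Fin 3 → Fin 2 → ℝ) (i : Fin 3)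
    (B : ℕ → ℕ → ℝ) (t j : ℕ) :
    matMul (qbdA v y i) B (t+1) j
      = v i 0 * B t j + v i 1 * B (t+1) j + v i 2 * B (t+2) j := by
  have h : ∀ k ∉ ({t, t+1, t+2} : Finset ℕ), qbdA v y i (t+1) k * B k j = 0 := by
    intro k hk
    simp only [Finset.mem_insert, Finset.mem_singleton, not_or] at hk
    have h1 : ¬ (k + 1 = t + 1) := by omega
    have h2 : ¬ (k = t + 1) := hk.2.1
    have h3 : ¬ (k = t + 1 + 1) := by omega
    simp [qbdA, h1, h2, h3, hk.1]
  rw [matMul, tsum_eq_sum h]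
  have ht1 : (t : ℕ) ∉ ({t+1, t+2} : Finset ℕ) := by simp
  have ht2 : (t+1 : ℕ) ∉ ({t+2} : Finset ℕ) := by simp
  rw [show ({t, t+1, t+2} : Finset ℕ) = insert t {t+1, t+2} from rfl,
    Finset.sum_insert ht1, show ({t+1, t+2} : Finset ℕ) = insert (t+1) {t+2} from rfl,
    Finset.sum_insert ht2, Finset.sum_singleton]
  have e1 : qbdA v y i (t+1) t = v i 0 := by simp [qbdA]
  have e2 : qbdA v y i (t+1) (t+1) = v i 1 := by
    have : ¬ (t + 1 + 1 = t + 1) := by omega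
    simp [qbdA, this]
  have e3 : qbdA v y i (t+1) (t+2) = v i 2 := by
    have h1 : ¬ (t + 2 + 1 = t + 1) := by omega
    have h2 : ¬ (t + 2 = t + 1) := by omega
    have h3 : t + 2 = t + 1 + 1 := by omega
    simp [qbdA, h1, h2, h3, show ¬ (t + 1 + 1 = t) by omega]
  rw [e1, e2, e3]
  ring

lemma qbdA_row_zero_sum (v : Fin 3 → Fin 3 → ℝ) (y : Fin 3 → Fin 2 → ℝ) (i : Fin 3) :
    ∑' j, qbdA v y i 0 j = y i 0 + y i 1 := by
  have h : ∀ k ∉ ({0, 1} : Finset ℕ), qbdA v y i 0 k = 0 := by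
    intro k hk
    simp only [Finset.mem_insert, Finset.mem_singleton, not_or] at hk
    simp [qbdA, hk.1, hk.2]
  rw [tsum_eq_sum h]
  simp [qbdA]

lemma qbdA_row_succ_sum (v : Fin 3 → Fin 3 → ℝ) (y : Fin 3 → Fin 2 → ℝ) (i : Fin 3)
    (t : ℕ) : ∑' j, qbdA v y i (t+1) j = v i 0 + v i 1 + v i 2 := by
  have h : ∀ k ∉ ({t, t+1, t+2} : Finset ℕ), qbdA v y i (t+1) k = 0 := by
    intro k hk
    simp only [Finset.mem_insert, Finset.mem_singleton, not_or] at hk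
    have h1 : ¬ (k + 1 = t + 1) := by omega
    have h2 : ¬ (k = t + 1) := hk.2.1
    have h3 : ¬ (k = t + 1 + 1) := by omega
    simp [qbdA, h1, h2, h3, hk.1]
  rw [tsum_eq_sum h]
  have ht1 : (t : ℕ) ∉ ({t+1, t+2} : Finset ℕ) := by simp
  have ht2 : (t+1 : ℕ) ∉ ({t+2} : Finset ℕ) := by simp
  rw [show ({t, t+1, t+2} : Finset ℕ) = insert t {t+1, t+2} from rfl,
    Finset.sum_insert ht1, show ({t+1, t+2} : Finset ℕ) = insert (t+1) {t+2} from rfl,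
    Finset.sum_insert ht2, Finset.sum_singleton]
  have e1 : qbdA v y i (t+1) t = v i 0 := by simp [qbdA]
  have e2 : qbdA v y i (t+1) (t+1) = v i 1 := by
    have : ¬ (t + 1 + 1 = t + 1) := by omega
    simp [qbdA, this]
  have e3 : qbdA v y i (t+1) (t+2) = v i 2 := by
    have h1 : ¬ (t + 2 + 1 = t + 1) := by omega
    have h2 : ¬ (t + 2 = t + 1) := by omega
    have h3 : t + 2 = t + 1 + 1 := by omega
    simp [qbdA, h1, h2, h3, show ¬ (t + 1 + 1 = t) by omega]
  rw [e1, e2, e3]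
  ring

/- STATEMENT 18 -/

set_option maxHeartbeats 2000000 in
theorem stmt18 (v : Fin 3 → Fin 3 → ℝ) (y : Fin 3 → Fin 2 → ℝ)
    (hvnn : ∀ i j, 0 ≤ v i j) (hynn : ∀ i j, 0 ≤ y i j)
    (hvsum : ∑ i, ∑ j, v i j = 1) (hysum : ∑ i, (y i 0 + y i 1) = 1)
    (hdrift :
      ((v 2 0 + v 2 1 + v 2 2 < v 0 0 + v 0 1 + v 0 2) ∧
        (y 2 0 + y 2 1 < y 0 0 + y 0 1)) ∨
      ((v 2 0 + v 2 1 + v 2 2 ≤ v 0 0 + v 0 1 + v 0 2) ∧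
        (0 < v 2 0 + v 2 1 + v 2 2) ∧
        (y 2 0 + y 2 1 ≤ y 0 0 + y 0 1) ∧ (0 < y 2 0 + y 2 1)))
    (Am1 A0 A1 : ℕ → ℕ → ℝ)
    (hAm1 : Am1 = qbdA v y 0) (hA0 : A0 = qbdA v y 1) (hA1 : A1 = qbdA v y 2)
    (G : ℕ → ℕ → ℝ)
    (hGnn : ∀ i j, 0 ≤ G i j)
    (hGrow : ∀ i, Summable (fun j => G i j) ∧ (∑' j, G i j) ≤ 1)
    (hGeq : ∀ i j, G i j =
      matMul A1 (matMul G G) i j + matMul A0 G i j + Am1 i j)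
    (hGdom : ∀ k i j, gbdIter Am1 A0 A1 k i j ≤ G i j) :
    Tendsto (fun k => normInf (fun i j => G i j - gbdIter Am1 A0 A1 k i j))
      atTop (𝓝 0) := by
  subst hAm1 hA0 hA1
  -- coefficients
  simp only [Fin.sum_univ_three] at hvsum hysum
  set p := v 0 0 + v 0 1 + v 0 2 with hp_def
  set q := v 1 0 + v 1 1 + v 1 2 with hq_def
  set r := v 2 0 + v 2 1 + v 2 2 with hr_def
  set pb := y 0 0 + y 0 1 with hpb_def
  set qb := y 1 0 + y 1 1 with hqb_def
  set rb := y 2 0 + y 2 1 with hrb_def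
  have hp : 0 ≤ p := by
    have := hvnn 0 0; have := hvnn 0 1; have := hvnn 0 2; rw [hp_def]; linarith
  have hq : 0 ≤ q := by
    have := hvnn 1 0; have := hvnn 1 1; have := hvnn 1 2; rw [hq_def]; linarith
  have hr : 0 ≤ r := by
    have := hvnn 2 0; have := hvnn 2 1; have := hvnn 2 2; rw [hr_def]; linarith
  have hpb : 0 ≤ pb := by
    have := hynn 0 0; have := hynn 0 1; rw [hpb_def]; linarith
  have hqb : 0 ≤ qb := by
    have := hynn 1 0; have := hynn 1 1; rw [hqb_def]; linarith
  have hrb : 0 ≤ rb := by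
    have := hynn 2 0; have := hynn 2 1; rw [hrb_def]; linarith
  have hs : p + q + r = 1 := by rw [hp_def, hq_def, hr_def]; linarith
  have hsb : pb + qb + rb = 1 := by rw [hpb_def, hqb_def, hrb_def]; linarith
  have hσtend : Tendsto (sigSeq p q r pb qb rb) atTop (𝓝 1) :=
    sigSeq_tendsto hp hq hr hpb hqb hrb hs hsb hdrift
  have hσ0 : ∀ k, 0 ≤ sigSeq p q r pb qb rb k := sigSeq_nonneg hp hq hr hpb hqb hrb
  -- basic facts about the iterates
  have hAnn : ∀ (i : Fin 3) (a b : ℕ), 0 ≤ qbdA v y i a b := qbdA_nonneg hvnn hynn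
  have hGknn : ∀ k i j, 0 ≤ gbdIter (qbdA v y 0) (qbdA v y 1) (qbdA v y 2) k i j := by
    intro k
    induction k with
    | zero => intro i j; simp [gbdIter]
    | succ k ih =>
      intro i j
      simp only [gbdIter]
      have h1 : 0 ≤ matMul (qbdA v y 2)
          (matMul (gbdIter (qbdA v y 0) (qbdA v y 1) (qbdA v y 2) k)
            (gbdIter (qbdA v y 0) (qbdA v y 1) (qbdA v y 2) k)) i j :=
        matMul_nonneg (hAnn 2) (matMul_nonneg ih ih) i j
      have h2 : 0 ≤ matMul (qbdA v y 1)
          (gbdIter (qbdA v y 0) (qbdA v y 1) (qbdA v y 2) k) i j :=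
        matMul_nonneg (hAnn 1) ih i j
      have h3 := hAnn 0 i j
      linarith
  have hGsum : ∀ i, Summable (fun j => G i j) := fun i => (hGrow i).1
  have hG1 : ∀ i, ∑' j, G i j ≤ 1 := fun i => (hGrow i).2
  have hGksum : ∀ k i, Summable (gbdIter (qbdA v y 0) (qbdA v y 1) (qbdA v y 2) k i) :=
    fun k i => Summable.of_nonneg_of_le (hGknn k i) (hGdom k i) (hGsum i)
  have hGkts1 : ∀ k i, ∑' j, gbdIter (qbdA v y 0) (qbdA v y 1) (qbdA v y 2) k i j ≤ 1 :=
    fun k i => le_trans (Summable.tsum_le_tsum (hGdom k i) (hGksum k i) (hGsum i)) (hG1 i)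
  -- the key induction: row sums of the iterates dominate sigSeq
  have key : ∀ k i, sigSeq p q r pb qb rb k
      ≤ ∑' j, gbdIter (qbdA v y 0) (qbdA v y 1) (qbdA v y 2) k i j := by
    intro k
    induction k with
    | zero =>
      intro i
      simp [sigSeq, gbdIter]
    | succ k ih =>
      intro i
      set B := gbdIter (qbdA v y 0) (qbdA v y 1) (qbdA v y 2) k with hB
      set σ := sigSeq p q r pb qb rb k with hσk
      have hBnn : ∀ t j, 0 ≤ B t j := hGknn k
      have hBsum : ∀ t, Summable (B t) := hGksum k
      have hBts1 : ∀ t, ∑' j, B t j ≤ 1 := hGkts1 k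
      set M := matMul B B with hM
      have hMnn : ∀ t j, 0 ≤ M t j := fun t j => matMul_nonneg hBnn hBnn t j
      have hMfact := fun t => matMul_self_row hBnn hBsum hBts1 t
      have hMrow : ∀ t, σ * σ ≤ ∑' j, M t j := by
        intro t
        rw [(hMfact t).2.2]
        have h1 : ∀ l, B t l * σ ≤ B t l * ∑' j, B l j :=
          fun l => mul_le_mul_of_nonneg_left (ih l) (hBnn t l)
        calc σ * σ ≤ (∑' l, B t l) * σ :=
              mul_le_mul_of_nonneg_right (ih t) (hσ0 k)
          _ = ∑' l, B t l * σ := tsum_mul_right.symm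
          _ ≤ ∑' l, B t l * ∑' j, B l j :=
              Summable.tsum_le_tsum h1 ((hBsum t).mul_right _) (hMfact t).2.1
      have hexp : ∀ j, gbdIter (qbdA v y 0) (qbdA v y 1) (qbdA v y 2) (k+1) i j
          = matMul (qbdA v y 2) M i j + matMul (qbdA v y 1) B i j + qbdA v y 0 i j :=
        fun j => rfl
      set X := fun j => matMul (qbdA v y 2) M i j with hX_def
      set Y := fun j => matMul (qbdA v y 1) B i j with hY_def
      set Z := fun j => qbdA v y 0 i j with hZ_def
      have hXnn : ∀ j, 0 ≤ X j := fun j => matMul_nonneg (hAnn 2) hMnn i j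
      have hYnn : ∀ j, 0 ≤ Y j := fun j => matMul_nonneg (hAnn 1) hBnn i j
      have hZnn : ∀ j, 0 ≤ Z j := fun j => hAnn 0 i j
      have hTot : Summable (fun j => gbdIter (qbdA v y 0) (qbdA v y 1) (qbdA v y 2) (k+1) i j) :=
        hGksum (k+1) i
      have hX : Summable X := by
        apply Summable.of_nonneg_of_le hXnn (fun j => ?_) hTot
        rw [hexp j]; have := hYnn j; have := hZnn j; linarith
      have hY : Summable Y := by
        apply Summable.of_nonneg_of_le hYnn (fun j => ?_) hTot
        rw [hexp j]; have := hXnn j; have := hZnn j; linarith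
      have hZ : Summable Z := by
        apply Summable.of_nonneg_of_le hZnn (fun j => ?_) hTot
        rw [hexp j]; have := hXnn j; have := hYnn j; linarith
      have htsum : ∑' j, gbdIter (qbdA v y 0) (qbdA v y 1) (qbdA v y 2) (k+1) i j
          = (∑' j, X j) + (∑' j, Y j) + (∑' j, Z j) := by
        calc ∑' j, gbdIter (qbdA v y 0) (qbdA v y 1) (qbdA v y 2) (k+1) i j
            = ∑' j, (X j + Y j + Z j) := tsum_congr hexp
          _ = (∑' j, X j) + (∑' j, Y j) + (∑' j, Z j) := by
              rw [Summable.tsum_add (hX.add hY) hZ, Summable.tsum_add hX hY]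
      rw [htsum]
      rcases i with _ | t
      · -- boundary row
        have hXsum : ∑' j, X j = y 2 0 * (∑' j, M 0 j) + y 2 1 * (∑' j, M 1 j) := by
          calc ∑' j, X j = ∑' j, (y 2 0 * M 0 j + y 2 1 * M 1 j) :=
                tsum_congr (fun j => matMul_qbdA_zero v y 2 M j)
            _ = y 2 0 * (∑' j, M 0 j) + y 2 1 * (∑' j, M 1 j) := by
                rw [Summable.tsum_add ((hMfact 0).1.mul_left _) ((hMfact 1).1.mul_left _),
                  tsum_mul_left, tsum_mul_left]
        have hYsum : ∑' j, Y j = y 1 0 * (∑' j, B 0 j) + y 1 1 * (∑' j, B 1 j) := by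
          calc ∑' j, Y j = ∑' j, (y 1 0 * B 0 j + y 1 1 * B 1 j) :=
                tsum_congr (fun j => matMul_qbdA_zero v y 1 B j)
            _ = y 1 0 * (∑' j, B 0 j) + y 1 1 * (∑' j, B 1 j) := by
                rw [Summable.tsum_add ((hBsum 0).mul_left _) ((hBsum 1).mul_left _),
                  tsum_mul_left, tsum_mul_left]
        have hZsum : ∑' j, Z j = pb := qbdA_row_zero_sum v y 0
        have hXge : rb * (σ * σ) ≤ ∑' j, X j := by
          rw [hXsum, hrb_def]
          nlinarith [mul_le_mul_of_nonneg_left (hMrow 0) (hynn 2 0),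
            mul_le_mul_of_nonneg_left (hMrow 1) (hynn 2 1)]
        have hYge : qb * σ ≤ ∑' j, Y j := by
          rw [hYsum, hqb_def]
          nlinarith [mul_le_mul_of_nonneg_left (ih 0) (hynn 1 0),
            mul_le_mul_of_nonneg_left (ih 1) (hynn 1 1)]
        have hmin : sigSeq p q r pb qb rb (k+1) ≤ pb + qb * σ + rb * σ^2 := by
          rw [sigSeq]; exact min_le_right _ _
        have hsq : σ^2 = σ * σ := sq σ
        rw [hZsum]
        rw [hsq] at hmin
        linarith
      · -- interior rows
        have hXsum : ∑' j, X j = v 2 0 * (∑' j, M t j) + v 2 1 * (∑' j, M (t+1) j)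
            + v 2 2 * (∑' j, M (t+2) j) := by
          calc ∑' j, X j
              = ∑' j, (v 2 0 * M t j + v 2 1 * M (t+1) j + v 2 2 * M (t+2) j) :=
                tsum_congr (fun j => matMul_qbdA_succ v y 2 M t j)
            _ = v 2 0 * (∑' j, M t j) + v 2 1 * (∑' j, M (t+1) j)
                + v 2 2 * (∑' j, M (t+2) j) := by
                rw [Summable.tsum_add (((hMfact t).1.mul_left _).add ((hMfact (t+1)).1.mul_left _))
                  ((hMfact (t+2)).1.mul_left _),
                  Summable.tsum_add ((hMfact t).1.mul_left _) ((hMfact (t+1)).1.mul_left _),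
                  tsum_mul_left, tsum_mul_left, tsum_mul_left]
        have hYsum : ∑' j, Y j = v 1 0 * (∑' j, B t j) + v 1 1 * (∑' j, B (t+1) j)
            + v 1 2 * (∑' j, B (t+2) j) := by
          calc ∑' j, Y j
              = ∑' j, (v 1 0 * B t j + v 1 1 * B (t+1) j + v 1 2 * B (t+2) j) :=
                tsum_congr (fun j => matMul_qbdA_succ v y 1 B t j)
            _ = v 1 0 * (∑' j, B t j) + v 1 1 * (∑' j, B (t+1) j)
                + v 1 2 * (∑' j, B (t+2) j) := by
                rw [Summable.tsum_add (((hBsum t).mul_left _).add ((hBsum (t+1)).mul_left _))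
                  ((hBsum (t+2)).mul_left _),
                  Summable.tsum_add ((hBsum t).mul_left _) ((hBsum (t+1)).mul_left _),
                  tsum_mul_left, tsum_mul_left, tsum_mul_left]
        have hZsum : ∑' j, Z j = p := qbdA_row_succ_sum v y 0 t
        have hXge : r * (σ * σ) ≤ ∑' j, X j := by
          rw [hXsum, hr_def]
          nlinarith [mul_le_mul_of_nonneg_left (hMrow t) (hvnn 2 0),
            mul_le_mul_of_nonneg_left (hMrow (t+1)) (hvnn 2 1),
            mul_le_mul_of_nonneg_left (hMrow (t+2)) (hvnn 2 2)]
        have hYge : q * σ ≤ ∑' j, Y j := by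
          rw [hYsum, hq_def]
          nlinarith [mul_le_mul_of_nonneg_left (ih t) (hvnn 1 0),
            mul_le_mul_of_nonneg_left (ih (t+1)) (hvnn 1 1),
            mul_le_mul_of_nonneg_left (ih (t+2)) (hvnn 1 2)]
        have hmin : sigSeq p q r pb qb rb (k+1) ≤ p + q * σ + r * σ^2 := by
          rw [sigSeq]; exact min_le_left _ _
        have hsq : σ^2 = σ * σ := sq σ
        rw [hZsum]
        rw [hsq] at hmin
        linarith
  -- conclusion
  have hbound : ∀ k, 0 ≤ normInf (fun i j => G i j -
        gbdIter (qbdA v y 0) (qbdA v y 1) (qbdA v y 2) k i j) ∧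
      normInf (fun i j => G i j - gbdIter (qbdA v y 0) (qbdA v y 1) (qbdA v y 2) k i j)
        ≤ 1 - sigSeq p q r pb qb rb k := by
    intro k
    have hrow : ∀ i, ∑' j, |G i j - gbdIter (qbdA v y 0) (qbdA v y 1) (qbdA v y 2) k i j|
        ≤ 1 - sigSeq p q r pb qb rb k := by
      intro i
      have habs : ∀ j, |G i j - gbdIter (qbdA v y 0) (qbdA v y 1) (qbdA v y 2) k i j|
          = G i j - gbdIter (qbdA v y 0) (qbdA v y 1) (qbdA v y 2) k i j :=
        fun j => abs_of_nonneg (sub_nonneg.2 (hGdom k i j))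
      rw [tsum_congr habs, Summable.tsum_sub (hGsum i) (hGksum k i)]
      have := hG1 i
      have := key k i
      linarith
    simp only [normInf]
    constructor
    · have hb : BddAbove (Set.range fun i =>
          ∑' j, |G i j - gbdIter (qbdA v y 0) (qbdA v y 1) (qbdA v y 2) k i j|) :=
        ⟨1 - sigSeq p q r pb qb rb k, by rintro x ⟨i, rfl⟩; exact hrow i⟩
      exact le_trans (tsum_nonneg fun j => abs_nonneg _) (le_ciSup hb 0)
    · exact ciSup_le hrow
  have h1 : Tendsto (fun k => 1 - sigSeq p q r pb qb rb k) atTop (𝓝 0) := by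
    have := tendsto_const_nhds (x := (1:ℝ)) (f := atTop (α := ℕ)) |>.sub hσtend
    simpa using this
  exact tendsto_of_tendsto_of_tendsto_of_le_of_le tendsto_const_nhds h1
    (fun k => (hbound k).1) (fun k => (hbound k).2)
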